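/- With B, critical values, and i(t,t') as above, the number of half-open intervals (t_k, t_j] in B equals i(t'',t_j) - i(t_k,t_j) - i(t'',t') + i(t_k,t') for any t'' with t_k < t'' < t_{k+1} and any t' with t_j < t' < t_{j+1}. -/
import Mathlib


open Classical Multiset

noncomputable section

/-- The four kinds of intervals: closed-closed, closed-open, open-closed, open-open. -/
inductive BarKind : Type
  | cc | co | oc | oo
  deriving DecidableEq

/-- A real interval of one of the four types, with endpoints `a ≤ b`. -/
structure Bar : Type where
  kind : BarKind
  a : ℝ
  b : ℝ

instance : DecidableEq Bar := Classical.decEq _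

namespace Bar

/-- The underlying set of points of the interval. -/
def toSet (I : Bar) : Set ℝ :=
  match I.kind with
  | .cc => Set.Icc I.a I.b
  | .co => Set.Ico I.a I.b
  | .oc => Set.Ioc I.a I.b
  | .oo => Set.Ioo I.a I.b

/-- Nonemptiness condition: `a ≤ b` for closed intervals, `a < b` otherwise. -/
def Valid (I : Bar) : Prop :=
  match I.kind with
  | .cc => I.a ≤ I.b
  | _ => I.a < I.b

def rightOpen (I : Bar) : Prop := I.kind = .co ∨ I.kind = .oo
def leftOpen (I : Bar) : Prop := I.kind = .oc ∨ I.kind = .oo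
def leftClosed (I : Bar) : Prop := I.kind = .cc ∨ I.kind = .co

end Bar

/-- `i(t,t')`: the number of intervals of `B` containing `[t,t']`. -/
def icount (B : Multiset Bar) (t t' : ℝ) : ℕ :=
  countP (fun I => Set.Icc t t' ⊆ I.toSet) B

/-- `l(t)`: the number of intervals of `B` containing `t`. -/
def lcount (B : Multiset Bar) (t : ℝ) : ℕ :=
  countP (fun I => t ∈ I.toSet) B

/-- `l⁺(t;t')`: intervals of `B` containing `t` with open right endpoint `≤ t'`. -/
def lplus (B : Multiset Bar) (t t' : ℝ) : ℕ :=
  countP (fun I => t ∈ I.toSet ∧ I.rightOpen ∧ I.b ≤ t') B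

/-- `l⁻(t;t'')`: intervals of `B` containing `t` with open left endpoint `≥ t''`. -/
def lminus (B : Multiset Bar) (t t'' : ℝ) : ℕ :=
  countP (fun I => t ∈ I.toSet ∧ I.leftOpen ∧ t'' ≤ I.a) B

/-- `e(t;t',t'')`: open intervals `(a,b)` of `B` with `t'' ≤ a < t < b ≤ t'`. -/
def ecount (B : Multiset Bar) (t t' t'' : ℝ) : ℕ :=
  countP (fun I => I.kind = .oo ∧ t'' ≤ I.a ∧ I.a < t ∧ t < I.b ∧ I.b ≤ t') B

/-- All endpoints of intervals of `B` lie among the critical values `t 0, …, t N`. -/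
def endpointsIn (B : Multiset Bar) (t : ℕ → ℝ) (N : ℕ) : Prop :=
  ∀ I ∈ B, (∃ i ≤ N, I.a = t i) ∧ (∃ j ≤ N, I.b = t j)

lemma Bar.ordConn (I : Bar) : I.toSet.OrdConnected := by
  unfold Bar.toSet
  rcases I with ⟨kind, a, b⟩
  cases kind <;> simp <;>
    first
      | exact Set.ordConnected_Icc
      | exact Set.ordConnected_Ico
      | exact Set.ordConnected_Ioc
      | exact Set.ordConnected_Ioo

lemma key (N : ℕ) (t : ℕ → ℝ) (ht : StrictMono t)
    (k j : ℕ) (hkj : k < j) (hk1 : k + 1 ≤ N) (hjN : j ≤ N)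
    (t'' t' : ℝ) (h1 : t k < t'') (h2 : t'' < t (k + 1))
    (h3 : t j < t') (h4 : j = N ∨ t' < t (j + 1))
    (I : Bar) (hIa : ∃ i ≤ N, I.a = t i) (hIb : ∃ i ≤ N, I.b = t i) :
    ((if (⟨.oc, t k, t j⟩ : Bar) = I then 1 else 0) : ℤ) =
      (if Set.Icc t'' (t j) ⊆ I.toSet then 1 else 0)
      - (if Set.Icc (t k) (t j) ⊆ I.toSet then 1 else 0)
      - (if Set.Icc t'' t' ⊆ I.toSet then 1 else 0)
      + (if Set.Icc (t k) t' ⊆ I.toSet then 1 else 0) := by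
  have hkj' : t k < t j := ht hkj
  have hk1j : t (k + 1) ≤ t j := ht.monotone hkj
  have h2j : t'' ≤ t j := le_of_lt (lt_of_lt_of_le h2 hk1j)
  have hkt' : t k < t' := lt_trans hkj' h3
  have h2t' : t'' ≤ t' := le_trans h2j (le_of_lt h3)
  by_cases hD : Set.Icc (t k) t' ⊆ I.toSet
  · have hBc : Set.Icc (t k) (t j) ⊆ I.toSet :=
      (Set.Icc_subset_Icc_right (le_of_lt h3)).trans hD
    have hC : Set.Icc t'' t' ⊆ I.toSet :=
      (Set.Icc_subset_Icc_left (le_of_lt h1)).trans hD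
    have hA : Set.Icc t'' (t j) ⊆ I.toSet :=
      (Set.Icc_subset_Icc_right (le_of_lt h3)).trans hC
    have hne : (⟨.oc, t k, t j⟩ : Bar) ≠ I := by
      intro h
      have := hD ⟨le_refl _, le_of_lt hkt'⟩
      rw [← h] at this
      simp [Bar.toSet] at this
    simp [hD, hBc, hC, hA, hne]
  · by_cases hBc : Set.Icc (t k) (t j) ⊆ I.toSet
    · by_cases hC : Set.Icc t'' t' ⊆ I.toSet
      · exfalso
        apply hD
        intro x hx
        rcases le_or_gt x (t j) with hx' | hx'
        · exact hBc ⟨hx.1, hx'⟩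
        · exact hC ⟨le_trans h2j (le_of_lt hx'), hx.2⟩
      · have hA : Set.Icc t'' (t j) ⊆ I.toSet :=
          (Set.Icc_subset_Icc_left (le_of_lt h1)).trans hBc
        have hne : (⟨.oc, t k, t j⟩ : Bar) ≠ I := by
          intro h
          have := hBc ⟨le_refl _, le_of_lt hkj'⟩
          rw [← h] at this
          simp [Bar.toSet] at this
        simp [hD, hBc, hC, hA, hne]
    · by_cases hC : Set.Icc t'' t' ⊆ I.toSet
      · have hA : Set.Icc t'' (t j) ⊆ I.toSet :=
          (Set.Icc_subset_Icc_right (le_of_lt h3)).trans hC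
        have hne : (⟨.oc, t k, t j⟩ : Bar) ≠ I := by
          intro h
          have := hC ⟨h2t', le_refl _⟩
          rw [← h] at this
          simp [Bar.toSet] at this
          linarith
        simp [hD, hBc, hC, hA, hne]
      · by_cases hA : Set.Icc t'' (t j) ⊆ I.toSet
        · -- hard case: I must be the target
          have ht2 : t'' ∈ I.toSet := hA ⟨le_refl _, h2j⟩
          have htj : t j ∈ I.toSet := hA ⟨h2j, le_refl _⟩
          have htk : t k ∉ I.toSet := by
            intro h
            exact hBc ((Bar.ordConn I).out h htj)
          have ht'not : t' ∉ I.toSet := by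
            intro h
            exact hC ((Bar.ordConn I).out ht2 h)
          obtain ⟨ia, hiaN, ha⟩ := hIa
          obtain ⟨ib, hibN, hb⟩ := hIb
          have hcritA : I.a ≤ t'' → I.a ≤ t k := by
            intro h
            have : ia < k + 1 := by
              rw [← ht.lt_iff_lt]
              calc t ia = I.a := ha.symm
                _ ≤ t'' := h
                _ < t (k+1) := h2
            rw [ha]
            exact ht.monotone (Nat.lt_succ_iff.mp this)
          rcases I with ⟨kind, a, b⟩
          simp only at ha hb hcritA
          cases kind
          · exfalso
            simp [Bar.toSet] at ht2 htj htk
            linarith [htk (hcritA ht2.1), htj.2]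
          · exfalso
            simp [Bar.toSet] at ht2 htj htk
            linarith [htk (hcritA ht2.1), htj.2]
          · -- oc: show a = t k, b = t j
            simp [Bar.toSet] at ht2 htj htk ht'not
            have hak : a ≤ t k := hcritA (le_of_lt ht2.1)
            have haeq : a = t k := le_antisymm hak (not_lt.mp
              (fun h => absurd (htk h) (not_lt.mpr (by linarith [htj.2]))))
            have hbt' : b < t' := ht'not (haeq ▸ hkt')
            have hbeq : b = t j := by
              refine le_antisymm ?_ htj.2
              rw [hb]
              rcases h4 with h4 | h4
              · exact h4 ▸ ht.monotone hibN
              · have : ib < j + 1 := by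
                  rw [← ht.lt_iff_lt]
                  calc t ib = b := hb.symm
                    _ < t' := hbt'
                    _ < t (j+1) := h4
                exact ht.monotone (Nat.lt_succ_iff.mp this)
            have heq : (⟨.oc, t k, t j⟩ : Bar) = ⟨.oc, a, b⟩ := by
              rw [haeq, hbeq]
            simp [hD, hBc, hC, hA, heq]
          · exfalso
            simp [Bar.toSet] at ht2 htj htk ht'not
            have hak : a ≤ t k := hcritA (le_of_lt ht2.1)
            have haeq : a = t k := le_antisymm hak (not_lt.mp
              (fun h => absurd (htk h) (not_le.mpr (by linarith [htj.2]))))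
            have hbt' : b ≤ t' := ht'not (haeq ▸ hkt')
            have hbj : t j < b := htj.2
            rcases h4 with h4 | h4
            · have : ib ≤ N := hibN
              have : b ≤ t N := hb ▸ ht.monotone hibN
              rw [h4] at hbj
              linarith
            · have : j + 1 ≤ ib := by
                rw [← Nat.lt_iff_add_one_le, ← ht.lt_iff_lt]
                calc t j < b := hbj
                  _ = t ib := hb
              have : t (j+1) ≤ b := hb ▸ ht.monotone this
              linarith
        · have hne : (⟨.oc, t k, t j⟩ : Bar) ≠ I := by
            intro h
            apply hA
            rw [← h]
            intro x hx
            simp [Bar.toSet]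
            exact ⟨lt_of_lt_of_le h1 hx.1, hx.2⟩
          simp [hD, hBc, hC, hA, hne]

theorem stmt3 (N : ℕ) (t : ℕ → ℝ) (ht : StrictMono t)
    (B : Multiset Bar) (hB : endpointsIn B t N)
    (k j : ℕ) (hkj : k < j) (hk1 : k + 1 ≤ N) (hjN : j ≤ N)
    (t'' t' : ℝ) (h1 : t k < t'') (h2 : t'' < t (k + 1))
    (h3 : t j < t') (h4 : j = N ∨ t' < t (j + 1)) :
    (count (⟨.oc, t k, t j⟩ : Bar) B : ℤ) =
      (icount B t'' (t j) : ℤ) - icount B (t k) (t j) - icount B t'' t'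
        + icount B (t k) t' := by
  induction B using Multiset.induction with
  | empty => simp [icount]
  | cons I s ih =>
    have hI := hB I (Multiset.mem_cons_self I s)
    have hs : endpointsIn s t N := fun J hJ => hB J (Multiset.mem_cons_of_mem hJ)
    have ihs := ih hs
    have hkey := key N t ht k j hkj hk1 hjN t'' t' h1 h2 h3 h4 I hI.1 hI.2
    simp only [icount, Multiset.count_cons, Multiset.countP_cons] at *
    push_cast at ihs ⊢
    linarith
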